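/- Let α > 1 and let T be the map on nonincreasing functions H : ℝ → [0,1] with H = 1 on (−∞, 0) given by (TH)(t) = exp(−∫_{−t}^∞ φH(z) dz) for t ≥ 0 and 1 for t < 0, where φH(t) = exp(−(1/α)∫_{−t}^∞ H(z) dz). Then the function G(t) = α/(1 + γ e^t) for t ≥ 0, G(t) = 1 for t < 0 (with γ = w_o e^{w_o}, w_o the positive root of w + e^{-w} = α) is a fixed point of T: TG = G. -/

import Mathlib

open MeasureTheory Set Filter

private lemma aux_deriv1 (α γ : ℝ) (hγ : 0 < γ) (z : ℝ) :
    HasDerivAt (fun z => α * Real.log γ - α * Real.log (Real.exp (-z) + γ))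
      (α / (1 + γ * Real.exp z)) z := by
  have h1 : HasDerivAt (fun z : ℝ => Real.exp (-z) + γ) (-Real.exp (-z)) z := by
    simpa using ((hasDerivAt_neg z).exp).add_const γ
  have hne : Real.exp (-z) + γ ≠ 0 := by positivity
  have h3 := ((h1.log hne).const_mul α).const_sub (α * Real.log γ)
  refine h3.congr_deriv ?_
  have h4 : Real.exp z ≠ 0 := (Real.exp_pos z).ne'
  have h5 : (1 : ℝ) + γ * Real.exp z ≠ 0 := by positivity
  rw [Real.exp_neg]
  field_simp

private lemma aux_int1 (α γ : ℝ) (hα : 0 < α) (hγ : 0 < γ) (s : ℝ) :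
    (∫ z in Set.Ioi s, α / (1 + γ * Real.exp z))
      = α * Real.log ((Real.exp (-s) + γ) / γ) ∧
    IntegrableOn (fun z => α / (1 + γ * Real.exp z)) (Set.Ioi s) := by
  have hderiv : ∀ x ∈ Set.Ici s,
      HasDerivAt (fun z => α * Real.log γ - α * Real.log (Real.exp (-z) + γ))
        (α / (1 + γ * Real.exp x)) x := fun x _ => aux_deriv1 α γ hγ x
  have hpos : ∀ x ∈ Set.Ioi s, 0 ≤ α / (1 + γ * Real.exp x) := fun x _ => by positivity
  have htend : Tendsto (fun z => α * Real.log γ - α * Real.log (Real.exp (-z) + γ))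
      atTop (nhds 0) := by
    have h1 : Tendsto (fun z : ℝ => Real.exp (-z) + γ) atTop (nhds γ) := by
      simpa using Real.tendsto_exp_neg_atTop_nhds_zero.add_const γ
    have h2 : Tendsto (fun z : ℝ => Real.log (Real.exp (-z) + γ)) atTop
        (nhds (Real.log γ)) := (Real.continuousAt_log hγ.ne').tendsto.comp h1
    have h3 := (h2.const_mul α).const_sub (α * Real.log γ)
    simpa using h3
  constructor
  · rw [integral_Ioi_of_hasDerivAt_of_nonneg' hderiv hpos htend,
      Real.log_div (by positivity) hγ.ne']
    ring
  · exact integrableOn_Ioi_deriv_of_nonneg' hderiv hpos htend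

private lemma aux_int2 (b : ℝ) (hb : 0 < b) :
    (∫ z in Set.Ioi (0:ℝ), Real.exp (-b * z)) = 1 / b := by
  have h := integral_comp_mul_left_Ioi (fun x => Real.exp (-x)) 0 hb
  simp only [mul_zero] at h
  rw [integral_exp_neg_Ioi_zero] at h
  calc (∫ z in Set.Ioi (0:ℝ), Real.exp (-b * z))
      = ∫ z in Set.Ioi (0:ℝ), Real.exp (-(b * z)) := by simp [neg_mul]
    _ = 1 / b := by rw [h]; simp [one_div, smul_eq_mul]

private lemma aux_int3 (γ t : ℝ) (hγ : 0 < γ) (ht : 0 ≤ t) :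
    (∫ z in Set.Ioc (-t) (0:ℝ), γ / (Real.exp z + γ))
      = t + Real.log (Real.exp (-t) + γ) - Real.log (1 + γ) := by
  rw [← intervalIntegral.integral_of_le (by linarith : -t ≤ (0:ℝ))]
  have hderiv : ∀ x ∈ Set.uIcc (-t) (0:ℝ),
      HasDerivAt (fun z => z - Real.log (Real.exp z + γ)) (γ / (Real.exp x + γ)) x := by
    intro x _
    have hne : Real.exp x + γ ≠ 0 := by positivity
    have h1 := (hasDerivAt_id x).sub (((Real.hasDerivAt_exp x).add_const γ).log hne)
    refine h1.congr_deriv ?_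
    field_simp
    ring
  have hcont : Continuous fun z : ℝ => γ / (Real.exp z + γ) :=
    continuous_const.div (Real.continuous_exp.add continuous_const)
      (fun x => by positivity)
  rw [intervalIntegral.integral_eq_sub_of_hasDerivAt hderiv (hcont.intervalIntegrable _ _)]
  simp only [Real.exp_zero]
  ring

theorem G_fixed_point (α w γ : ℝ) (hα : 1 < α) (hw : 0 < w)
    (hwα : w + Real.exp (-w) = α) (hγ : γ = w * Real.exp w)
    (G : ℝ → ℝ)
    (hG : ∀ t : ℝ, G t = if 0 ≤ t then α / (1 + γ * Real.exp t) else 1)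
    (φG : ℝ → ℝ)
    (hφG : ∀ t : ℝ, φG t = Real.exp (-(1 / α) * ∫ z in Set.Ici (-t), G z))
    (TG : ℝ → ℝ)
    (hTG : ∀ t : ℝ, TG t =
      if 0 ≤ t then Real.exp (-∫ z in Set.Ici (-t), φG z) else 1) :
    TG = G := by
  have hα0 : (0:ℝ) < α := by linarith
  have hγ0 : (0:ℝ) < γ := by rw [hγ]; positivity
  have h1γ : (0:ℝ) < 1 + γ := by linarith
  -- key algebraic identities
  have hαγ : α * γ = w * (1 + γ) := by
    rw [hγ, ← hwα, Real.exp_neg]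
    have := (Real.exp_pos w).ne'
    field_simp
    ring
  have keyw : γ / (1 + γ) * α = w := by
    rw [div_mul_eq_mul_div, div_eq_iff h1γ.ne']
    linarith [hαγ]
  have key2 : (1 + γ) * Real.exp (-w) = α := by
    rw [hγ, ← hwα, Real.exp_neg]
    have := (Real.exp_pos w).ne'
    field_simp
    ring
  -- integral of G on Ici s for s ≥ 0
  have IGpos : ∀ s : ℝ, 0 ≤ s →
      (∫ z in Set.Ici s, G z) = α * Real.log ((Real.exp (-s) + γ) / γ) := by
    intro s hs
    rw [integral_Ici_eq_integral_Ioi,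
      setIntegral_congr_fun measurableSet_Ioi
        (fun z hz => show G z = α / (1 + γ * Real.exp z) by
          rw [hG, if_pos (le_trans hs (le_of_lt hz))]),
      (aux_int1 α γ hα0 hγ0 s).1]
  -- integrability of G on Ici 0
  have hGint0 : IntegrableOn G (Set.Ici (0:ℝ)) := by
    rw [integrableOn_Ici_iff_integrableOn_Ioi]
    exact ((aux_int1 α γ hα0 hγ0 0).2).congr_fun
      (fun z hz => show α / (1 + γ * Real.exp z) = G z by
        rw [hG, if_pos (le_of_lt hz)]) measurableSet_Ioi
  -- integral of G on Ici s for s ≤ 0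
  have IGneg : ∀ s : ℝ, s ≤ 0 →
      (∫ z in Set.Ici s, G z) = -s + α * Real.log ((1 + γ) / γ) := by
    intro s hs
    have hdisj : Disjoint (Set.Ico s 0) (Set.Ici (0:ℝ)) :=
      Set.disjoint_left.2 (fun x hx hx' => absurd hx' (not_le.2 hx.2))
    have hconst : Set.EqOn G (fun _ => (1:ℝ)) (Set.Ico s 0) := by
      intro z hz
      rw [hG]
      exact if_neg (not_le.2 hz.2)
    have hint1 : IntegrableOn G (Set.Ico s 0) := by
      refine (integrableOn_const ?_).congr_fun (fun z hz => (hconst hz).symm)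
        measurableSet_Ico
      rw [Real.volume_Ico]
      exact ENNReal.ofReal_ne_top
    rw [← Set.Ico_union_Ici_eq_Ici hs, setIntegral_union hdisj measurableSet_Ici hint1 hGint0,
      setIntegral_congr_fun measurableSet_Ico hconst, setIntegral_const, IGpos 0 le_rfl]
    rw [measureReal_def, Real.volume_Ico, smul_eq_mul, mul_one, ENNReal.toReal_ofReal (by linarith)]
    simp
  -- values of φG
  have φGpos : ∀ z : ℝ, 0 ≤ z → φG z = γ / (1 + γ) * Real.exp (-(1/α) * z) := by
    intro z hz
    rw [hφG, IGneg (-z) (by linarith)]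
    have h1 : -(1/α) * (-(-z) + α * Real.log ((1 + γ) / γ))
        = -(1/α) * z + -Real.log ((1 + γ) / γ) := by
      field_simp
      ring
    have h2 : Real.exp (-Real.log ((1 + γ) / γ)) = γ / (1 + γ) := by
      rw [Real.exp_neg, Real.exp_log (by positivity), inv_div]
    rw [h1, Real.exp_add, h2]
    ring
  have φGneg : ∀ z : ℝ, z < 0 → φG z = γ / (Real.exp z + γ) := by
    intro z hz
    rw [hφG, IGpos (-z) (by linarith)]
    have h1 : -(1/α) * (α * Real.log ((Real.exp (-(-z)) + γ) / γ))
        = -Real.log ((Real.exp z + γ) / γ) := by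
      rw [neg_neg]
      field_simp
    rw [h1, Real.exp_neg, Real.exp_log (by positivity), inv_div]
  -- integral of φG on Ici 0
  have hφint0 : (∫ z in Set.Ici (0:ℝ), φG z) = γ / (1 + γ) * α := by
    rw [integral_Ici_eq_integral_Ioi,
      setIntegral_congr_fun measurableSet_Ioi
        (fun z hz => φGpos z (le_of_lt hz)),
      MeasureTheory.integral_const_mul]
    have h := aux_int2 (1/α) (by positivity : (0:ℝ) < 1/α)
    rw [h]
    congr 1
    field_simp
  have hφGint0 : IntegrableOn φG (Set.Ici (0:ℝ)) := by
    rw [integrableOn_Ici_iff_integrableOn_Ioi]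
    have hb : IntegrableOn (fun z : ℝ => γ / (1 + γ) * Real.exp (-(1/α) * z))
        (Set.Ioi (0:ℝ)) :=
      (exp_neg_integrableOn_Ioi 0 (show (0:ℝ) < 1/α by positivity)).const_mul _
    exact hb.congr_fun (fun z hz => (φGpos z (le_of_lt hz)).symm) measurableSet_Ioi
  -- main computation
  funext t
  rw [hTG, hG]
  by_cases ht : 0 ≤ t
  · rw [if_pos ht, if_pos ht]
    have hdisj : Disjoint (Set.Ico (-t) 0) (Set.Ici (0:ℝ)) :=
      Set.disjoint_left.2 (fun x hx hx' => absurd hx' (not_le.2 hx.2))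
    have hEq : Set.EqOn φG (fun z => γ / (Real.exp z + γ)) (Set.Ico (-t) 0) :=
      fun z hz => φGneg z hz.2
    have hcont : Continuous fun z : ℝ => γ / (Real.exp z + γ) :=
      continuous_const.div (Real.continuous_exp.add continuous_const)
        (fun x => by positivity)
    have hint1 : IntegrableOn φG (Set.Ico (-t) 0) :=
      ((hcont.integrableOn_Icc.mono_set Set.Ico_subset_Icc_self).congr_fun (fun z hz => (hEq hz).symm) measurableSet_Ico)
    have hI : (∫ z in Set.Ici (-t), φG z)
        = t + Real.log (Real.exp (-t) + γ) - Real.log (1 + γ) + γ / (1 + γ) * α := by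
      rw [← Set.Ico_union_Ici_eq_Ici (by linarith : -t ≤ (0:ℝ)),
        setIntegral_union hdisj measurableSet_Ici hint1 hφGint0,
        setIntegral_congr_fun measurableSet_Ico hEq,
        setIntegral_congr_set Ico_ae_eq_Ioc,
        aux_int3 γ t hγ0 ht, hφint0]
    rw [hI, keyw]
    have h2 : -(t + Real.log (Real.exp (-t) + γ) - Real.log (1 + γ) + w)
        = -t + -Real.log (Real.exp (-t) + γ) + Real.log (1 + γ) + -w := by ring
    rw [h2, Real.exp_add, Real.exp_add, Real.exp_add, Real.exp_neg (Real.log _),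
      Real.exp_log (by positivity : (0:ℝ) < Real.exp (-t) + γ),
      Real.exp_log h1γ]
    have h3 : Real.exp (-t) * (Real.exp (-t) + γ)⁻¹ * (1 + γ) * Real.exp (-w)
        = α * Real.exp (-t) / (Real.exp (-t) + γ) := by
      rw [← key2]; ring
    rw [h3]
    rw [Real.exp_neg]
    have h4 : Real.exp t ≠ 0 := (Real.exp_pos t).ne'
    have h5 : Real.exp t ⁻¹ + γ ≠ 0 := by positivity
    have h6 : (1:ℝ) + γ * Real.exp t ≠ 0 := by positivity
    field_simp
  · rw [if_neg ht, if_neg ht]
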